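/- arXiv:1712.05735 — 3 statements merged into one kernel-verified Lean document; each statement's English description precedes it below -/
import Mathlib

section
/- For every Boolean function f:{0,1}^n→{0,1}, the decrease of f is at most 2^{DT(f)} − 1. -/
open Finset

/-- The maximal chain in the Boolean hypercube corresponding to a permutation `σ`:
its `k`-th element is the point whose `i`-th coordinate is `1` iff `σ i < k`. -/
def chainOf {n : ℕ} (σ : Equiv.Perm (Fin n)) (k : Fin (n + 1)) : Fin n → Bool :=
  fun i => decide ((σ i : ℕ) < (k : ℕ))

/-- The number of alternations of `f` along the chain of `σ`. -/
def altOn {n : ℕ} (f : (Fin n → Bool) → Bool) (σ : Equiv.Perm (Fin n)) : ℕ :=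
  (Finset.univ.filter fun k : Fin n =>
    f (chainOf σ k.castSucc) ≠ f (chainOf σ k.succ)).card

/-- The alternation of a Boolean function: the maximum number of value changes
along any maximal chain from `0^n` to `1^n`. -/
def alt {n : ℕ} (f : (Fin n → Bool) → Bool) : ℕ :=
  Finset.univ.sup (altOn f)

/-- The number of decreases (`1 → 0` changes) of `f` along the chain of `σ`. -/
def dcOn {n : ℕ} (f : (Fin n → Bool) → Bool) (σ : Equiv.Perm (Fin n)) : ℕ :=
  (Finset.univ.filter fun k : Fin n =>
    f (chainOf σ k.castSucc) = true ∧ f (chainOf σ k.succ) = false).card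

/-- The decrease of a Boolean function: the maximum number of `1 → 0` changes
along any maximal chain from `0^n` to `1^n`. -/
def dc {n : ℕ} (f : (Fin n → Bool) → Bool) : ℕ :=
  Finset.univ.sup (dcOn f)

/-- Deterministic decision trees on `n` Boolean variables. -/
inductive DTree (n : ℕ) : Type where
  | leaf : Bool → DTree n
  | node : Fin n → DTree n → DTree n → DTree n

namespace DTree

/-- Evaluation of a decision tree on an input. -/
def eval {n : ℕ} : DTree n → (Fin n → Bool) → Bool
  | leaf b, _ => b
  | node i t0 t1, x => if x i then eval t1 x else eval t0 x

/-- Depth of a decision tree. -/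
def depth {n : ℕ} : DTree n → ℕ
  | leaf _ => 0
  | node _ t0 t1 => max (depth t0) (depth t1) + 1

end DTree

/-- Minimum depth of a deterministic decision tree computing `f`. -/
noncomputable def DT {n : ℕ} (f : (Fin n → Bool) → Bool) : ℕ :=
  sInf {d | ∃ t : DTree n, (∀ x, t.eval x = f x) ∧ t.depth = d}

/-- Flip the `i`-th bit of `x`. -/
def flipBit {n : ℕ} (x : Fin n → Bool) (i : Fin n) : Fin n → Bool :=
  Function.update x i (!x i)

/-- Sensitivity of `f` at `x`. -/
def sensAt {n : ℕ} (f : (Fin n → Bool) → Bool) (x : Fin n → Bool) : ℕ :=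
  (Finset.univ.filter fun i => f (flipBit x i) ≠ f x).card

/-- Sensitivity of `f`. -/
def sens {n : ℕ} (f : (Fin n → Bool) → Bool) : ℕ :=
  Finset.univ.sup fun x : Fin n → Bool => sensAt f x

/-- Total influence of `f`: the average sensitivity over a uniformly random input. -/
noncomputable def influence {n : ℕ} (f : (Fin n → Bool) → Bool) : ℝ :=
  (∑ x : Fin n → Bool, (sensAt f x : ℝ)) / 2 ^ n

/-- Fourier coefficient of a real-valued function on the Boolean cube. -/
noncomputable def bFourier {n : ℕ} (g : (Fin n → Bool) → ℝ) (S : Finset (Fin n)) : ℝ :=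
  (∑ x : Fin n → Bool, g x * (-1 : ℝ) ^ (S.filter fun i => x i = true).card) / 2 ^ n

/-- The `±1`-valued version `1 - 2f` of a `{0,1}`-valued Boolean function. -/
def toPM {n : ℕ} (f : (Fin n → Bool) → Bool) : (Fin n → Bool) → ℝ :=
  fun x => 1 - 2 * (if f x then (1 : ℝ) else 0)

/-- Sparsity of a real-valued function on the Boolean cube: the number of nonzero
Fourier coefficients. -/
noncomputable def sparsityR {n : ℕ} (g : (Fin n → Bool) → ℝ) : ℕ :=
  letI := Classical.decPred fun S : Finset (Fin n) => bFourier g S ≠ 0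
  (Finset.univ.filter fun S : Finset (Fin n) => bFourier g S ≠ 0).card

/-- Sparsity of a `{0,1}`-valued Boolean function, i.e. the sparsity of `1 - 2f`. -/
noncomputable def sparsity {n : ℕ} (f : (Fin n → Bool) → Bool) : ℕ :=
  sparsityR (toPM f)

/-- Evaluation of a multilinear polynomial, given by its coefficients indexed by
monomials (subsets of variables), on a Boolean input. -/
def mlEval {n : ℕ} {R : Type*} [CommRing R] (c : Finset (Fin n) → R) (x : Fin n → Bool) : R :=
  ∑ S : Finset (Fin n), c S * ∏ i ∈ S, (if x i then (1 : R) else 0)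

/-- `c` is the (unique) multilinear polynomial over `R` agreeing with `f` on the cube. -/
def Represents {n : ℕ} {R : Type*} [CommRing R] (c : Finset (Fin n) → R)
    (f : (Fin n → Bool) → Bool) : Prop :=
  ∀ x, mlEval c x = if f x then 1 else 0

/-- The degree of the multilinear polynomial over `R` agreeing with `f`. -/
noncomputable def degRing {n : ℕ} (R : Type*) [CommRing R] (f : (Fin n → Bool) → Bool) : ℕ :=
  sInf {d | ∃ c : Finset (Fin n) → R, Represents c f ∧ ∀ S, c S ≠ 0 → S.card ≤ d}

/-- Real degree `deg f`. -/
noncomputable def degR {n : ℕ} (f : (Fin n → Bool) → Bool) : ℕ := degRing ℝ f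

/-- Degree over `ℤ_m`; `degMod 2 f` is the `𝔽₂`-degree. -/
noncomputable def degMod {n : ℕ} (m : ℕ) (f : (Fin n → Bool) → Bool) : ℕ := degRing (ZMod m) f

/-- Block composition `f ∘ g` of Boolean functions. -/
def comp {m n : ℕ} (f : (Fin m → Bool) → Bool) (g : (Fin n → Bool) → Bool) :
    (Fin (m * n) → Bool) → Bool :=
  fun x => f fun i => g fun j => x (finProdFinEquiv (i, j))

/-- `iterComp h k` is the `(k+1)`-fold composition `h^{∘(k+1)}`. -/
def iterComp {n : ℕ} (h : (Fin n → Bool) → Bool) : (k : ℕ) → (Fin (n ^ (k + 1)) → Bool) → Bool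
  | 0 => fun x => h fun i => x (Fin.cast (pow_one n).symm i)
  | k + 1 => fun x =>
      comp (iterComp h (k)) h fun i => x (Fin.cast (pow_succ n (k + 1)).symm i)

/-- The address function `ADDR₂` on `6` bits: `ADDR₂(x₁,x₂,y₀,y₁,y₂,y₃) = y_{2x₁+x₂}`. -/
def ADDR2 (x : Fin 6 → Bool) : Bool :=
  if x 0 then (if x 1 then x 5 else x 4) else (if x 1 then x 3 else x 2)

/-- The family `F = {f_k}`: `f₁(x) = x`, and
`f_{k+1}(z, u, v) = f_k(u)` if `z = 0` and `f_k(v)` if `z = 1`,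
where `u, v` are disjoint blocks of `2^k - 1` variables.
(`famF 0` is a dummy constant function; the family starts at `k = 1`.) -/
def famF : (k : ℕ) → (Fin (2 ^ k - 1) → Bool) → Bool
  | 0 => fun _ => false
  | 1 => fun x => x ⟨0, by norm_num⟩
  | k + 2 => fun x =>
      if x ⟨0, by
          have h : 1 < 2 ^ (k + 2) := Nat.one_lt_two_pow_iff.mpr (by omega)
          omega⟩ then
        famF (k + 1) (fun j => x ⟨1 + (2 ^ (k + 1) - 1) + (j : ℕ), by
          have hj := j.isLt
          have h : 2 ^ (k + 2) = 2 * 2 ^ (k + 1) := by ring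
          have h1 : 0 < 2 ^ (k + 1) := Nat.two_pow_pos _
          omega⟩)
      else
        famF (k + 1) (fun j => x ⟨1 + (j : ℕ), by
          have hj := j.isLt
          have h : 2 ^ (k + 2) = 2 * 2 ^ (k + 1) := by ring
          have h1 : 0 < 2 ^ (k + 1) := Nat.two_pow_pos _
          omega⟩)
/-- Full decision tree reading variables `n-k, …, n-1`. -/
def buildTree {n : ℕ} (f : (Fin n → Bool) → Bool) : (k : ℕ) → k ≤ n → (Fin n → Bool) → DTree n
  | 0, _, y => .leaf (f y)
  | k+1, hk, y =>
      .node ⟨n - (k+1), by omega⟩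
        (buildTree f k (by omega) (Function.update y ⟨n-(k+1), by omega⟩ false))
        (buildTree f k (by omega) (Function.update y ⟨n-(k+1), by omega⟩ true))

lemma buildTree_depth {n : ℕ} (f : (Fin n → Bool) → Bool) :
    ∀ (k : ℕ) (hk : k ≤ n) (y : Fin n → Bool), (buildTree f k hk y).depth = k := by
  intro k
  induction k with
  | zero => intro hk y; rfl
  | succ k ih =>
      intro hk y
      simp [buildTree, DTree.depth, ih]

lemma buildTree_eval {n : ℕ} (f : (Fin n → Bool) → Bool) :
    ∀ (k : ℕ) (hk : k ≤ n) (y x : Fin n → Bool),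
      (buildTree f k hk y).eval x = f (fun j => if (j : ℕ) < n - k then y j else x j) := by
  intro k
  induction k with
  | zero =>
      intro hk y x
      simp only [buildTree, DTree.eval]
      congr 1
      funext j
      simp [j.isLt]
  | succ k ih =>
      intro hk y x
      have key : ∀ b : Bool, x ⟨n-(k+1), by omega⟩ = b →
          f (fun j => if (j : ℕ) < n - k then
              Function.update y ⟨n-(k+1), by omega⟩ b j else x j)
          = f (fun j => if (j : ℕ) < n - (k+1) then y j else x j) := by
        intro b hb
        congr 1
        funext j
        by_cases hj : j = ⟨n-(k+1), by omega⟩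
        · subst hj
          simp only [Function.update_self]
          have h1 : n - (k+1) < n - k := by omega
          have h2 : ¬ (n - (k+1) < n - (k+1)) := by omega
          simp [h1, h2, hb]
        · rw [Function.update_of_ne hj]
          have hjv : (j : ℕ) ≠ n - (k+1) := fun h => hj (Fin.ext h)
          by_cases h1 : (j : ℕ) < n - (k+1)
          · have h2 : (j : ℕ) < n - k := by omega
            simp [h1, h2]
          · have h2 : ¬ (j : ℕ) < n - k := by omega
            simp [h1, h2]
      simp only [buildTree, DTree.eval]
      cases hb : x ⟨n-(k+1), by omega⟩
      · simp only [Bool.false_eq_true, if_false, ih]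
        exact key false hb
      · simp only [if_true, ih]
        exact key true hb

lemma exists_tree {n : ℕ} (f : (Fin n → Bool) → Bool) :
    ∃ t : DTree n, (∀ x, t.eval x = f x) ∧ t.depth = n := by
  refine ⟨buildTree f n le_rfl (fun _ => false), ?_, buildTree_depth f n le_rfl _⟩
  intro x
  rw [buildTree_eval]
  congr 1
  funext j
  simp

lemma dcOn_eval_le {n : ℕ} (t : DTree n) (σ : Equiv.Perm (Fin n)) :
    dcOn t.eval σ ≤ 2 ^ t.depth - 1 := by
  induction t with
  | leaf b =>
      simp only [dcOn, DTree.eval, DTree.depth, pow_zero]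
      cases b <;> simp
  | node i t0 t1 ih0 ih1 =>
      have hsub : (Finset.univ.filter fun k : Fin n =>
            (DTree.node i t0 t1).eval (chainOf σ k.castSucc) = true ∧
            (DTree.node i t0 t1).eval (chainOf σ k.succ) = false) ⊆
          ((Finset.univ.filter fun k : Fin n =>
            t0.eval (chainOf σ k.castSucc) = true ∧ t0.eval (chainOf σ k.succ) = false) ∪
           (Finset.univ.filter fun k : Fin n =>
            t1.eval (chainOf σ k.castSucc) = true ∧ t1.eval (chainOf σ k.succ) = false)) ∪
          {σ i} := by
        intro k hk
        simp only [Finset.mem_filter, Finset.mem_univ, true_and] at hk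
        simp only [Finset.mem_union, Finset.mem_filter, Finset.mem_univ, true_and,
          Finset.mem_singleton]
        rcases lt_trichotomy (k : ℕ) ((σ i : ℕ)) with h | h | h
        · left; left
          have h1 : chainOf σ k.castSucc i = false := by
            simp [chainOf, Fin.coe_castSucc]; omega
          have h2 : chainOf σ k.succ i = false := by
            simp [chainOf, Fin.val_succ]; omega
          simpa [DTree.eval, h1, h2] using hk
        · right; exact Fin.ext h
        · left; right
          have h1 : chainOf σ k.castSucc i = true := by
            simp [chainOf, Fin.coe_castSucc]; omega
          have h2 : chainOf σ k.succ i = true := by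
            simp [chainOf, Fin.val_succ]; omega
          simpa [DTree.eval, h1, h2] using hk
      have hcard := Finset.card_le_card hsub
      have h1 := Finset.card_union_le
        ((Finset.univ.filter fun k : Fin n =>
            t0.eval (chainOf σ k.castSucc) = true ∧ t0.eval (chainOf σ k.succ) = false) ∪
         (Finset.univ.filter fun k : Fin n =>
            t1.eval (chainOf σ k.castSucc) = true ∧ t1.eval (chainOf σ k.succ) = false))
        ({σ i} : Finset (Fin n))
      have h2 := Finset.card_union_le
        (Finset.univ.filter fun k : Fin n =>
            t0.eval (chainOf σ k.castSucc) = true ∧ t0.eval (chainOf σ k.succ) = false)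
        (Finset.univ.filter fun k : Fin n =>
            t1.eval (chainOf σ k.castSucc) = true ∧ t1.eval (chainOf σ k.succ) = false)
      have hs : ({σ i} : Finset (Fin n)).card = 1 := Finset.card_singleton _
      have hp0 : (2:ℕ) ^ t0.depth ≤ 2 ^ max t0.depth t1.depth :=
        Nat.pow_le_pow_right (by norm_num) (le_max_left _ _)
      have hp1 : (2:ℕ) ^ t1.depth ≤ 2 ^ max t0.depth t1.depth :=
        Nat.pow_le_pow_right (by norm_num) (le_max_right _ _)
      have hd : (2:ℕ) ^ (DTree.node i t0 t1).depth = 2 * 2 ^ max t0.depth t1.depth := by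
        simp [DTree.depth, pow_succ, Nat.mul_comm]
      have e0 : (1:ℕ) ≤ 2 ^ t0.depth := Nat.one_le_two_pow
      have e1 : (1:ℕ) ≤ 2 ^ t1.depth := Nat.one_le_two_pow
      have ih0' := ih0
      have ih1' := ih1
      simp only [dcOn] at ih0' ih1' ⊢
      omega

/-- For every Boolean function `f : {0,1}ⁿ → {0,1}`,
`dc f ≤ 2 ^ DT f - 1`. -/
theorem dc_le_two_pow_DT_sub_one {n : ℕ} (f : (Fin n → Bool) → Bool) :
    dc f ≤ 2 ^ DT f - 1 := by
  have hne : {d | ∃ t : DTree n, (∀ x, t.eval x = f x) ∧ t.depth = d}.Nonempty := by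
    obtain ⟨t, ht, hd⟩ := exists_tree f
    exact ⟨n, t, ht, hd⟩
  obtain ⟨t, ht, hd⟩ := Nat.sInf_mem hne
  have hf : f = t.eval := funext fun x => (ht x).symm
  have hDT : DT f = t.depth := hd.symm
  rw [dc, hDT, hf]
  exact Finset.sup_le fun σ _ => dcOn_eval_le t σ
end

section
/- For any Boolean function h:{0,1}^n→{0,1} with h(0^n) ≠ h(1^n) and any k ≥ 2, the k-fold composition satisfies alt(h^{∘k}) ≥ alt(h)^k. -/
open Finset

section AltCompAux

private lemma alt_cast' {N M : ℕ} (e : N = M) (f : (Fin N → Bool) → Bool) :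
    alt (fun x : Fin M → Bool => f (fun i => x (Fin.cast e i))) = alt f := by
  subst e; rfl

private lemma ne_W_iff {m : ℕ} (f : (Fin m → Bool) → Bool) (W : Bool → Fin m → Bool)
    (b0 b1 a a' : Bool) (hb : b0 ≠ b1) :
    (f (W a) ≠ f (W a')) ↔ ((f (W b0) ≠ f (W b1)) ∧ a ≠ a') := by
  cases a <;> cases a' <;> cases b0 <;> cases b1 <;> simp_all [ne_comm]

private lemma count_comp {m n : ℕ} (f : (Fin m → Bool) → Bool) (g : (Fin n → Bool) → Bool)
    (hg : g (fun _ => false) ≠ g (fun _ => true))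
    (τ : Equiv.Perm (Fin m)) (σ : Equiv.Perm (Fin n)) :
    (Finset.univ.filter fun t : Fin m =>
        f (fun i => if (τ i : ℕ) < (t : ℕ) then g (fun _ => true) else g (fun _ => false)) ≠
        f (fun i => if (τ i : ℕ) < (t : ℕ) + 1 then g (fun _ => true) else g (fun _ => false))).card
      * altOn g σ ≤ alt (comp f g) := by
  classical
  set b0 := g (fun _ => false) with hb0
  set b1 := g (fun _ => true) with hb1
  set ρ : Equiv.Perm (Fin (m * n)) :=
    finProdFinEquiv.symm.trans ((Equiv.prodCongr τ σ).trans finProdFinEquiv) with hρ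
  have hval : ∀ K : Fin (m * n + 1),
      comp f g (chainOf ρ K) =
        f (fun i => g fun j => decide ((σ j : ℕ) + n * (τ i : ℕ) < (K : ℕ))) := by
    intro K
    show f _ = f _
    congr 1
    funext i
    congr 1
    funext j
    show decide ((ρ (finProdFinEquiv (i, j)) : ℕ) < (K : ℕ)) = _
    have h1 : ρ (finProdFinEquiv (i, j)) = finProdFinEquiv (τ i, σ j) := by
      simp [hρ]
    rw [h1]
    rfl
  have hW : ∀ (t : Fin m) (K : Fin (n + 1)) (M : Fin (m * n + 1)),
      (M : ℕ) = (K : ℕ) + n * (t : ℕ) →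
      comp f g (chainOf ρ M) =
        f (fun i => if (τ i : ℕ) < (t : ℕ) then b1
          else if (τ i : ℕ) = (t : ℕ) then g (chainOf σ K) else b0) := by
    intro t K M hM
    rw [hval]
    congr 1
    funext i
    rw [hM]
    rcases lt_trichotomy ((τ i : ℕ)) ((t : ℕ)) with h | h | h
    · rw [if_pos h, hb1]
      congr 1
      funext j
      have h2 : n * ((τ i : ℕ) + 1) ≤ n * (t : ℕ) := Nat.mul_le_mul_left n h
      rw [Nat.mul_succ] at h2
      have h3 := (σ j).isLt
      exact decide_eq_true (by linarith)
    · rw [if_neg (by omega), if_pos h, h]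
      congr 1
      funext j
      show decide _ = decide ((σ j : ℕ) < (K : ℕ))
      exact decide_eq_decide.mpr Nat.add_lt_add_iff_right
    · rw [if_neg (by omega), if_neg (by omega), hb0]
      congr 1
      funext j
      have h2 : n * ((t : ℕ) + 1) ≤ n * (τ i : ℕ) := Nat.mul_le_mul_left n h
      rw [Nat.mul_succ] at h2
      have h3 := (σ j).isLt
      have h4 := K.isLt
      exact decide_eq_false (by push_neg; linarith)
  have key : altOn (comp f g) ρ =
      (Finset.univ.filter fun t : Fin m =>
        f (fun i => if (τ i : ℕ) < (t : ℕ) then b1 else b0) ≠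
        f (fun i => if (τ i : ℕ) < (t : ℕ) + 1 then b1 else b0)).card * altOn g σ := by
    have step : ∀ p : Fin m × Fin n,
        (comp f g (chainOf ρ (finProdFinEquiv p).castSucc) ≠
          comp f g (chainOf ρ (finProdFinEquiv p).succ)) ↔
        ((f (fun i => if (τ i : ℕ) < (p.1 : ℕ) then b1 else b0) ≠
            f (fun i => if (τ i : ℕ) < (p.1 : ℕ) + 1 then b1 else b0)) ∧
          (g (chainOf σ p.2.castSucc) ≠ g (chainOf σ p.2.succ))) := by
      rintro ⟨t, s⟩
      have e1 : (((finProdFinEquiv (t, s)).castSucc : Fin (m * n + 1)) : ℕ) =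
          ((s.castSucc : Fin (n + 1)) : ℕ) + n * (t : ℕ) := rfl
      have e2 : (((finProdFinEquiv (t, s)).succ : Fin (m * n + 1)) : ℕ) =
          ((s.succ : Fin (n + 1)) : ℕ) + n * (t : ℕ) := by
        show (s : ℕ) + n * (t : ℕ) + 1 = ((s : ℕ) + 1) + n * (t : ℕ)
        ring
      rw [hW t s.castSucc _ e1, hW t s.succ _ e2]
      have hWY0 : (fun i => if (τ i : ℕ) < (t : ℕ) then b1
            else if (τ i : ℕ) = (t : ℕ) then b0 else b0) =
          (fun i => if (τ i : ℕ) < (t : ℕ) then b1 else b0) := by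
        funext i; split_ifs <;> rfl
      have hWY1 : (fun i => if (τ i : ℕ) < (t : ℕ) then b1
            else if (τ i : ℕ) = (t : ℕ) then b1 else b0) =
          (fun i => if (τ i : ℕ) < (t : ℕ) + 1 then b1 else b0) := by
        funext i
        by_cases h1 : (τ i : ℕ) < (t : ℕ)
        · rw [if_pos h1, if_pos (by omega)]
        · by_cases h2 : (τ i : ℕ) = (t : ℕ)
          · rw [if_neg h1, if_pos h2, if_pos (by omega)]
          · rw [if_neg h1, if_neg h2, if_neg (by omega)]
      rw [ne_W_iff f
        (fun a i => if (τ i : ℕ) < (t : ℕ) then b1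
          else if (τ i : ℕ) = (t : ℕ) then a else b0) b0 b1 _ _ hg]
      rw [hWY0, hWY1]
    show (Finset.univ.filter fun k : Fin (m * n) =>
        comp f g (chainOf ρ k.castSucc) ≠ comp f g (chainOf ρ k.succ)).card = _
    calc (Finset.univ.filter fun k : Fin (m * n) =>
          comp f g (chainOf ρ k.castSucc) ≠ comp f g (chainOf ρ k.succ)).card
        = (Finset.univ.filter fun p : Fin m × Fin n =>
            (f (fun i => if (τ i : ℕ) < (p.1 : ℕ) then b1 else b0) ≠
              f (fun i => if (τ i : ℕ) < (p.1 : ℕ) + 1 then b1 else b0)) ∧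
            (g (chainOf σ p.2.castSucc) ≠ g (chainOf σ p.2.succ))).card := by
          apply Finset.card_equiv finProdFinEquiv.symm
          intro k
          simp only [Finset.mem_filter, Finset.mem_univ, true_and]
          rw [← step (finProdFinEquiv.symm k), Equiv.apply_symm_apply]
      _ = _ := by
          rw [← Finset.univ_product_univ,
            Finset.filter_product
              (fun t : Fin m =>
                (f fun i => if (τ i : ℕ) < (t : ℕ) then b1 else b0) ≠
                  f fun i => if (τ i : ℕ) < (t : ℕ) + 1 then b1 else b0)
              (fun s : Fin n => g (chainOf σ s.castSucc) ≠ g (chainOf σ s.succ)),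
            Finset.card_product]
          rfl
  rw [← key]
  exact Finset.le_sup (Finset.mem_univ ρ)

private lemma exists_perm_count {m : ℕ} (f : (Fin m → Bool) → Bool) (b0 b1 : Bool)
    (hb : b1 = !b0) (τ0 : Equiv.Perm (Fin m)) :
    ∃ τ : Equiv.Perm (Fin m),
      (Finset.univ.filter fun t : Fin m =>
        f (fun i => if (τ i : ℕ) < (t : ℕ) then b1 else b0) ≠
        f (fun i => if (τ i : ℕ) < (t : ℕ) + 1 then b1 else b0)).card = altOn f τ0 := by
  cases b0 with
  | false =>
    simp only [Bool.not_false] at hb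
    subst hb
    refine ⟨τ0, ?_⟩
    unfold altOn
    congr 1
  | true =>
    simp only [Bool.not_true] at hb
    subst hb
    refine ⟨τ0.trans Fin.revPerm, ?_⟩
    unfold altOn
    apply Finset.card_equiv Fin.revPerm
    intro t
    simp only [Finset.mem_filter, Finset.mem_univ, true_and]
    have ht := t.isLt
    have c1 : (fun i => if ((τ0.trans Fin.revPerm) i : ℕ) < (t : ℕ) then false else true) =
        chainOf τ0 (Fin.revPerm t).succ := by
      funext i
      have h1 : ((τ0.trans Fin.revPerm) i : ℕ) = m - ((τ0 i : ℕ) + 1) := Fin.val_rev _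
      have h2 := (τ0 i).isLt
      have h3 : (((Fin.revPerm t).succ : Fin (m + 1)) : ℕ) = m - (t : ℕ) := by
        show ((Fin.rev t : Fin m) : ℕ) + 1 = m - (t : ℕ)
        rw [Fin.val_rev]; omega
      show _ = decide ((τ0 i : ℕ) < (((Fin.revPerm t).succ : Fin (m + 1)) : ℕ))
      rw [h3]
      by_cases h : ((τ0.trans Fin.revPerm) i : ℕ) < (t : ℕ)
      · rw [if_pos h]; symm; apply decide_eq_false; omega
      · rw [if_neg h]; symm; apply decide_eq_true; omega
    have c2 : (fun i => if ((τ0.trans Fin.revPerm) i : ℕ) < (t : ℕ) + 1 then false else true) =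
        chainOf τ0 (Fin.revPerm t).castSucc := by
      funext i
      have h1 : ((τ0.trans Fin.revPerm) i : ℕ) = m - ((τ0 i : ℕ) + 1) := Fin.val_rev _
      have h2 := (τ0 i).isLt
      have h3 : (((Fin.revPerm t).castSucc : Fin (m + 1)) : ℕ) = m - ((t : ℕ) + 1) := by
        show ((Fin.rev t : Fin m) : ℕ) = m - ((t : ℕ) + 1)
        rw [Fin.val_rev]
      show _ = decide ((τ0 i : ℕ) < (((Fin.revPerm t).castSucc : Fin (m + 1)) : ℕ))
      rw [h3]
      by_cases h : ((τ0.trans Fin.revPerm) i : ℕ) < (t : ℕ) + 1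
      · rw [if_pos h]; symm; apply decide_eq_false; omega
      · rw [if_neg h]; symm; apply decide_eq_true; omega
    rw [c1, c2]
    exact ne_comm

private lemma alt_comp_ge {m n : ℕ} (f : (Fin m → Bool) → Bool) (g : (Fin n → Bool) → Bool)
    (hg : g (fun _ => false) ≠ g (fun _ => true)) :
    alt f * alt g ≤ alt (comp f g) := by
  classical
  obtain ⟨τ0, -, hτ0⟩ := Finset.exists_mem_eq_sup (Finset.univ : Finset (Equiv.Perm (Fin m)))
    Finset.univ_nonempty (altOn f)
  obtain ⟨σ0, -, hσ0⟩ := Finset.exists_mem_eq_sup (Finset.univ : Finset (Equiv.Perm (Fin n)))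
    Finset.univ_nonempty (altOn g)
  have hb : g (fun _ => true) = !g (fun _ => false) := by
    revert hg
    cases h1 : g (fun _ => false) <;> cases h2 : g (fun _ => true) <;> simp
  obtain ⟨τ, hτ⟩ := exists_perm_count f (g fun _ => false) (g fun _ => true) hb τ0
  have h1 : alt f = altOn f τ0 := hτ0
  have h2 : alt g = altOn g σ0 := hσ0
  rw [h1, h2, ← hτ]
  exact count_comp f g hg τ σ0

private lemma alt_iter {n : ℕ} (h : (Fin n → Bool) → Bool)
    (hne : h (fun _ => false) ≠ h (fun _ => true)) :
    ∀ k : ℕ, alt h ^ (k + 1) ≤ alt (iterComp h k)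
  | 0 => by
    rw [pow_one]
    exact le_of_eq (alt_cast' (pow_one n).symm h).symm
  | (k + 1) => by
    have h1 : alt (iterComp h (k + 1)) = alt (comp (iterComp h k) h) :=
      alt_cast' (pow_succ n (k + 1)).symm (comp (iterComp h k) h)
    calc alt h ^ (k + 2) = alt h ^ (k + 1) * alt h := by ring
      _ ≤ alt (iterComp h k) * alt h := Nat.mul_le_mul_right _ (alt_iter h hne k)
      _ ≤ alt (comp (iterComp h k) h) := alt_comp_ge _ _ hne
      _ = alt (iterComp h (k + 1)) := h1.symm

end AltCompAux
/-- For any Boolean function `h : {0,1}ⁿ → {0,1}` with `h 0ⁿ ≠ h 1ⁿ`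
and any `k ≥ 2`, the `k`-fold composition satisfies `alt (h^{∘k}) ≥ (alt h) ^ k`.
(Recall `iterComp h (k - 1)` is the `k`-fold composition `h^{∘k}`.) -/
theorem alt_iterComp_ge {n : ℕ} (h : (Fin n → Bool) → Bool)
    (hne : h (fun _ => false) ≠ h (fun _ => true)) (k : ℕ) (hk : 2 ≤ k) :
    alt h ^ k ≤ alt (iterComp h (k - 1)) := by
  obtain ⟨j, rfl⟩ : ∃ j, k = j + 1 := ⟨k - 1, by omega⟩
  simpa using alt_iter h hne j
end

section
/- For every k ≥ 1, the function g_k = ADDR_2^{∘k} (the k-fold composition of the address function ADDR_2, on n_k = 6^k variables) satisfies alt(g_k) ≥ 5^k and s(g_k) ≤ 3^k, and hence alt(g_k) ≥ s(g_k)^{log_3 5}; moreover DT(g_k) = 3^k = n_k^{log_6 3}. -/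
open Finset

section AuxAddr2
open Finset

private lemma measure_reindex {α : Sort*} (M : (n : ℕ) → ((Fin n → Bool) → Bool) → α)
    {a b : ℕ} (h : a = b) (F : (Fin a → Bool) → Bool) :
    M b (fun x => F (fun i => x (Fin.cast h i))) = M a F := by
  subst h; rfl

namespace DTree

def queries {n : ℕ} : DTree n → (Fin n → Bool) → Finset (Fin n)
  | leaf _, _ => ∅
  | node i t0 t1, x => insert i (if x i then queries t1 x else queries t0 x)

lemma card_queries_le_depth {n : ℕ} (t : DTree n) (x : Fin n → Bool) :
    (queries t x).card ≤ t.depth := by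
  induction t with
  | leaf b => exact Nat.le_refl 0
  | node i t0 t1 ih0 ih1 =>
    show (insert i (if x i then queries t1 x else queries t0 x)).card ≤ _
    refine le_trans (Finset.card_insert_le _ _) ?_
    show _ ≤ max t0.depth t1.depth + 1
    rcases Bool.eq_false_or_eq_true (x i) with hx | hx <;> simp only [hx] <;> simp <;> omega

lemma eval_flip_of_not_mem {n : ℕ} (t : DTree n) (x : Fin n → Bool) (i : Fin n)
    (h : i ∉ queries t x) : t.eval (flipBit x i) = t.eval x := by
  induction t with
  | leaf b => rfl
  | node j t0 t1 ih0 ih1 =>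
    have h' : i ∉ insert j (if x j then queries t1 x else queries t0 x) := h
    simp only [Finset.mem_insert, not_or] at h'
    obtain ⟨hij, hq⟩ := h'
    have hxj : flipBit x i j = x j := by
      simp [flipBit, Function.update_of_ne (Ne.symm hij)]
    simp only [eval, hxj]
    rcases Bool.eq_false_or_eq_true (x j) with hx | hx <;> simp only [hx] at hq ⊢ <;> simp at hq ⊢
    · exact ih1 hq
    · exact ih0 hq

lemma sensAt_le_depth {n : ℕ} (t : DTree n) (f : (Fin n → Bool) → Bool)
    (hc : ∀ x, t.eval x = f x) (x : Fin n → Bool) : sensAt f x ≤ t.depth := by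
  refine le_trans ?_ (card_queries_le_depth t x)
  apply Finset.card_le_card
  intro i hi
  simp only [sensAt, Finset.mem_filter] at hi
  by_contra hq
  exact hi.2 (by rw [← hc, ← hc, eval_flip_of_not_mem t x i hq])

def graft {n N : ℕ} (emb : Fin n → Fin N) (L : Bool → DTree N) : DTree n → DTree N
  | leaf b => L b
  | node j a0 a1 => node (emb j) (graft emb L a0) (graft emb L a1)

lemma eval_graft {n N : ℕ} (emb : Fin n → Fin N) (L : Bool → DTree N) (t : DTree n)
    (x : Fin N → Bool) :
    (graft emb L t).eval x = (L (t.eval (fun j => x (emb j)))).eval x := by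
  induction t with
  | leaf b => rfl
  | node j a0 a1 ih0 ih1 =>
    simp only [graft, eval]
    rcases Bool.eq_false_or_eq_true (x (emb j)) with hx | hx <;> simp [hx, ih0, ih1]

lemma depth_graft {n N : ℕ} (emb : Fin n → Fin N) (L : Bool → DTree N) (t : DTree n) :
    (graft emb L t).depth ≤ t.depth + max (L false).depth (L true).depth := by
  induction t with
  | leaf b =>
    cases b
    · simp only [graft, depth, Nat.zero_add]; exact le_max_left _ _
    · simp only [graft, depth, Nat.zero_add]; exact le_max_right _ _
  | node j a0 a1 ih0 ih1 =>
    simp only [graft, depth] at *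
    omega

def compT {m n : ℕ} (tg : DTree n) : DTree m → DTree (m * n)
  | leaf b => leaf b
  | node i t0 t1 => graft (fun j => finProdFinEquiv (i, j))
      (fun b => cond b (compT tg t1) (compT tg t0)) tg

lemma eval_compT {m n : ℕ} (tg : DTree n) (T : DTree m) (x : Fin (m * n) → Bool) :
    (compT tg T).eval x = T.eval (fun i => tg.eval (fun j => x (finProdFinEquiv (i, j)))) := by
  induction T with
  | leaf b => rfl
  | node i t0 t1 ih0 ih1 =>
    simp only [compT, eval_graft, eval]
    rcases Bool.eq_false_or_eq_true (tg.eval (fun j => x (finProdFinEquiv (i, j))))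
      with h | h <;> simp [h, ih0, ih1]

lemma depth_compT {m n : ℕ} (tg : DTree n) (T : DTree m) :
    (compT tg T).depth ≤ T.depth * tg.depth := by
  induction T with
  | leaf b => simp [compT, depth]
  | node i t0 t1 ih0 ih1 =>
    refine le_trans (depth_graft _ _ _) ?_
    simp only [depth, cond_false, cond_true]
    have h2 := Nat.mul_le_mul_right tg.depth (le_max_left t0.depth t1.depth)
    have h3 := Nat.mul_le_mul_right tg.depth (le_max_right t0.depth t1.depth)
    calc tg.depth + max ((compT tg t0).depth) ((compT tg t1).depth)
        ≤ tg.depth + max t0.depth t1.depth * tg.depth :=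
          Nat.add_le_add_left (max_le (le_trans ih0 h2) (le_trans ih1 h3)) _
      _ = (max t0.depth t1.depth + 1) * tg.depth := by rw [Nat.succ_mul, Nat.add_comm]

end DTree

/-- The combined invariant carried through the induction. -/
def MyInv {n : ℕ} (F : (Fin n → Bool) → Bool) (k : ℕ) : Prop :=
  5 ^ k ≤ alt F ∧ sens F ≤ 3 ^ k ∧
  (∀ b : Bool, ∃ x, F x = b ∧ 3 ^ k ≤ sensAt F x) ∧
  (∃ t : DTree n, (∀ x, t.eval x = F x) ∧ t.depth ≤ 3 ^ k) ∧
  F (fun _ => false) = false ∧ F (fun _ => true) = true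

section CompLemmas

variable {m n : ℕ} {f : (Fin m → Bool) → Bool} {g : (Fin n → Bool) → Bool}

def bigPerm (σf : Equiv.Perm (Fin m)) (σg : Equiv.Perm (Fin n)) : Equiv.Perm (Fin (m * n)) :=
  (finProdFinEquiv.symm.trans (Equiv.prodCongr σf σg)).trans finProdFinEquiv

lemma bigPerm_apply (σf : Equiv.Perm (Fin m)) (σg : Equiv.Perm (Fin n)) (i : Fin m) (j : Fin n) :
    bigPerm σf σg (finProdFinEquiv (i, j)) = finProdFinEquiv (σf i, σg j) := by
  simp [bigPerm]

lemma comp_chain_eval (hg0 : g (fun _ => false) = false) (hg1 : g (fun _ => true) = true)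
    (σf : Equiv.Perm (Fin m)) (σg : Equiv.Perm (Fin n))
    (a : Fin m) (c : Fin (n + 1)) (T : Fin (m * n + 1)) (hT : (T : ℕ) = n * a + c) :
    comp f g (chainOf (bigPerm σf σg) T) =
      f (Function.update (fun i => decide ((σf i : ℕ) < (a : ℕ))) (σf.symm a)
          (g (chainOf σg c))) := by
  show f _ = f _
  refine congrArg f (funext fun i => ?_)
  have hval : ∀ j : Fin n, chainOf (bigPerm σf σg) T (finProdFinEquiv (i, j)) =
      decide ((σg j : ℕ) + n * (σf i : ℕ) < n * (a : ℕ) + (c : ℕ)) := by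
    intro j
    simp only [chainOf, bigPerm_apply]
    rw [show ((finProdFinEquiv (σf i, σg j) : Fin (m * n)) : ℕ)
        = (σg j : ℕ) + n * (σf i : ℕ) from rfl, hT]
  by_cases hi : i = σf.symm a
  · subst hi
    rw [Function.update_self]
    refine congrArg g (funext fun j => ?_)
    rw [hval j, Equiv.apply_symm_apply]
    simp only [chainOf]
    rw [decide_eq_decide]
    omega
  · rw [Function.update_of_ne hi]
    have hne : (σf i : ℕ) ≠ (a : ℕ) := by
      intro h
      exact hi (by rw [← show σf i = a from Fin.ext h, Equiv.symm_apply_apply])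
    rcases Nat.lt_or_ge (σf i : ℕ) (a : ℕ) with hlt | hge
    · have hb : (fun j => chainOf (bigPerm σf σg) T (finProdFinEquiv (i, j)))
          = (fun _ : Fin n => true) := by
        funext j
        rw [hval j]
        apply decide_eq_true
        have hj := (σg j).isLt
        have hmul : n * ((σf i : ℕ) + 1) ≤ n * (a : ℕ) := Nat.mul_le_mul_left n hlt
        have hexp : n * ((σf i : ℕ) + 1) = n * (σf i : ℕ) + n := by ring
        omega
      rw [hb, hg1]
      exact (decide_eq_true hlt).symm
    · have ha1 : (a : ℕ) + 1 ≤ (σf i : ℕ) := by omega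
      have hb : (fun j => chainOf (bigPerm σf σg) T (finProdFinEquiv (i, j)))
          = (fun _ : Fin n => false) := by
        funext j
        rw [hval j]
        apply decide_eq_false
        have hc := c.isLt
        have hmul : n * ((a : ℕ) + 1) ≤ n * (σf i : ℕ) := Nat.mul_le_mul_left n ha1
        have hexp : n * ((a : ℕ) + 1) = n * (a : ℕ) + n := by ring
        omega
      rw [hb, hg0]
      exact (decide_eq_false (by omega)).symm

lemma altOn_comp (hg0 : g (fun _ => false) = false) (hg1 : g (fun _ => true) = true)
    (σf : Equiv.Perm (Fin m)) (σg : Equiv.Perm (Fin n)) :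
    altOn f σf * altOn g σg ≤ altOn (comp f g) (bigPerm σf σg) := by
  unfold altOn
  rw [← Finset.card_product]
  apply Finset.card_le_card_of_injOn (fun p => finProdFinEquiv p)
  · rintro ⟨a, b⟩ hp
    simp only [Finset.mem_coe, Finset.mem_product, Finset.mem_filter, Finset.mem_univ, true_and] at hp ⊢
    obtain ⟨ha, hb⟩ := hp
    have e1 := comp_chain_eval (f := f) hg0 hg1 σf σg a b.castSucc
      ((finProdFinEquiv (a, b) : Fin (m * n)).castSucc) (by
        simp only [Fin.coe_castSucc]
        show (b : ℕ) + n * (a : ℕ) = n * (a : ℕ) + (b : ℕ)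
        exact Nat.add_comm _ _)
    have e2 := comp_chain_eval (f := f) hg0 hg1 σf σg a b.succ
      ((finProdFinEquiv (a, b) : Fin (m * n)).succ) (by
        simp only [Fin.val_succ]
        show (b : ℕ) + n * (a : ℕ) + 1 = n * (a : ℕ) + ((b : ℕ) + 1)
        omega)
    have hP0 : Function.update (fun i => decide ((σf i : ℕ) < (a : ℕ))) (σf.symm a) false
        = chainOf σf a.castSucc := by
      funext i
      by_cases hi : i = σf.symm a
      · subst hi
        rw [Function.update_self]
        simp only [chainOf, Fin.coe_castSucc, Equiv.apply_symm_apply]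
        exact (decide_eq_false (lt_irrefl _)).symm
      · rw [Function.update_of_ne hi]
        simp only [chainOf, Fin.coe_castSucc]
    have hP1 : Function.update (fun i => decide ((σf i : ℕ) < (a : ℕ))) (σf.symm a) true
        = chainOf σf a.succ := by
      funext i
      by_cases hi : i = σf.symm a
      · subst hi
        rw [Function.update_self]
        simp only [chainOf, Fin.val_succ, Equiv.apply_symm_apply]
        exact (decide_eq_true (by omega)).symm
      · rw [Function.update_of_ne hi]
        have hne : (σf i : ℕ) ≠ (a : ℕ) := by
          intro h
          exact hi (by rw [← show σf i = a from Fin.ext h, Equiv.symm_apply_apply])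
        simp only [chainOf, Fin.val_succ]
        rw [decide_eq_decide]
        omega
    rw [e1, e2]
    cases h1 : g (chainOf σg b.castSucc) <;> cases h2 : g (chainOf σg b.succ)
    · exact absurd (h1.trans h2.symm) hb
    · rw [hP0, hP1]; exact ha
    · rw [hP0, hP1]; exact ha.symm
    · exact absurd (h1.trans h2.symm) hb
  · intro p _ q _ h
    exact finProdFinEquiv.injective h

lemma comp_flip_eq (x : Fin (m * n) → Bool) (i : Fin m) (j : Fin n) :
    comp f g (flipBit x (finProdFinEquiv (i, j))) =
      f (Function.update (fun i' => g fun j' => x (finProdFinEquiv (i', j'))) i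
          (g (flipBit (fun j' => x (finProdFinEquiv (i, j'))) j))) := by
  show f _ = f _
  refine congrArg f (funext fun i' => ?_)
  by_cases hi : i' = i
  · subst hi
    rw [Function.update_self]
    refine congrArg g (funext fun j' => ?_)
    by_cases hj : j' = j
    · subst hj
      simp [flipBit]
    · have hne : finProdFinEquiv (i', j') ≠ finProdFinEquiv (i', j) :=
        fun h => hj (congrArg Prod.snd (finProdFinEquiv.injective h))
      simp [flipBit, Function.update_of_ne hne, Function.update_of_ne hj]
  · rw [Function.update_of_ne hi]
    refine congrArg g (funext fun j' => ?_)
    have hne : finProdFinEquiv (i', j') ≠ finProdFinEquiv (i, j) :=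
      fun h => hi (congrArg Prod.fst (finProdFinEquiv.injective h))
    simp [flipBit, Function.update_of_ne hne]

lemma sensAt_comp_le (x : Fin (m * n) → Bool) :
    sensAt (comp f g) x ≤ sensAt f (fun i => g fun j => x (finProdFinEquiv (i, j))) * sens g := by
  set z : Fin m → Bool := fun i => g fun j => x (finProdFinEquiv (i, j)) with hz
  have hsub : (Finset.univ.filter fun K => comp f g (flipBit x K) ≠ comp f g x) ⊆
      (Finset.univ.filter fun i => f (flipBit z i) ≠ f z).biUnion
        (fun i => ((Finset.univ.filter fun j =>
            g (flipBit (fun j' => x (finProdFinEquiv (i, j'))) j)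
              ≠ g (fun j' => x (finProdFinEquiv (i, j')))).image
          fun j => finProdFinEquiv (i, j))) := by
    intro K hK
    rw [Finset.mem_filter] at hK
    obtain ⟨-, hne⟩ := hK
    obtain ⟨⟨i, j⟩, hij⟩ : ∃ p : Fin m × Fin n, finProdFinEquiv p = K :=
      ⟨finProdFinEquiv.symm K, Equiv.apply_symm_apply _ _⟩
    subst hij
    rw [comp_flip_eq] at hne
    have hxz : comp f g x = f z := rfl
    rw [hxz] at hne
    have hj : g (flipBit (fun j' => x (finProdFinEquiv (i, j'))) j)
        ≠ g (fun j' => x (finProdFinEquiv (i, j'))) := by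
      intro h
      apply hne
      rw [h]
      rw [show (g fun j' => x (finProdFinEquiv (i, j'))) = z i from rfl,
        Function.update_eq_self]
    have hgval : g (flipBit (fun j' => x (finProdFinEquiv (i, j'))) j) = ! z i := by
      have hzi : z i = g (fun j' => x (finProdFinEquiv (i, j'))) := rfl
      rcases Bool.eq_false_or_eq_true (g (flipBit (fun j' => x (finProdFinEquiv (i, j'))) j))
        with h | h <;>
      rcases Bool.eq_false_or_eq_true (z i) with h2 | h2 <;> simp_all
    have hfi : f (flipBit z i) ≠ f z := by
      rw [hgval] at hne
      exact hne
    rw [Finset.mem_biUnion]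
    exact ⟨i, Finset.mem_filter.mpr ⟨Finset.mem_univ _, hfi⟩,
      Finset.mem_image.mpr ⟨j, Finset.mem_filter.mpr ⟨Finset.mem_univ _, hj⟩, rfl⟩⟩
  have h1 : sensAt (comp f g) x ≤ _ := Finset.card_le_card hsub
  refine le_trans h1 (le_trans Finset.card_biUnion_le ?_)
  have h2 : ∀ i : Fin m, ((Finset.univ.filter fun j =>
      g (flipBit (fun j' => x (finProdFinEquiv (i, j'))) j)
        ≠ g (fun j' => x (finProdFinEquiv (i, j')))).image
        fun j => finProdFinEquiv (i, j)).card ≤ sens g := by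
    intro i
    refine le_trans Finset.card_image_le ?_
    show sensAt g (fun j' => x (finProdFinEquiv (i, j'))) ≤ sens g
    exact Finset.le_sup (Finset.mem_univ _)
  refine le_trans (Finset.sum_le_sum fun i _ => h2 i) ?_
  rw [Finset.sum_const, smul_eq_mul]
  exact le_of_eq rfl

lemma sens_comp : sens (comp f g) ≤ sens f * sens g := by
  apply Finset.sup_le
  intro x _
  refine le_trans (sensAt_comp_le x) ?_
  apply mul_le_mul_left
  exact Finset.le_sup (Finset.mem_univ _)

lemma sensAt_comp_point (z : Fin m → Bool) (u : Bool → (Fin n → Bool))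
    (hu : ∀ c, g (u c) = c) (s : ℕ) (hs : ∀ c, s ≤ sensAt g (u c)) :
    comp f g (fun K => u (z (finProdFinEquiv.symm K).1) (finProdFinEquiv.symm K).2) = f z ∧
    sensAt f z * s ≤ sensAt (comp f g)
      (fun K => u (z (finProdFinEquiv.symm K).1) (finProdFinEquiv.symm K).2) := by
  set x : Fin (m * n) → Bool :=
    fun K => u (z (finProdFinEquiv.symm K).1) (finProdFinEquiv.symm K).2 with hxdef
  have hblk : ∀ i : Fin m, (fun j => x (finProdFinEquiv (i, j))) = u (z i) := by
    intro i
    funext j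
    show u (z (finProdFinEquiv.symm (finProdFinEquiv (i, j))).1)
      (finProdFinEquiv.symm (finProdFinEquiv (i, j))).2 = u (z i) j
    rw [Equiv.symm_apply_apply]
  have hval : comp f g x = f z := by
    show f _ = f z
    refine congrArg f (funext fun i => ?_)
    rw [hblk i, hu]
  refine ⟨hval, ?_⟩
  set Sf := Finset.univ.filter fun i => f (flipBit z i) ≠ f z with hSf
  set t : Fin m → Finset (Fin (m * n)) := fun i =>
    ((Finset.univ.filter fun j => g (flipBit (u (z i)) j) ≠ g (u (z i))).image
      fun j => finProdFinEquiv (i, j)) with ht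
  have hsub : Sf.biUnion t ⊆
      Finset.univ.filter fun K => comp f g (flipBit x K) ≠ comp f g x := by
    intro K hK
    rw [Finset.mem_biUnion] at hK
    obtain ⟨i, hiSf, hKim⟩ := hK
    rw [ht, Finset.mem_image] at hKim
    obtain ⟨j, hjS, rfl⟩ := hKim
    rw [hSf, Finset.mem_filter] at hiSf
    rw [Finset.mem_filter] at hjS
    refine Finset.mem_filter.mpr ⟨Finset.mem_univ _, ?_⟩
    rw [comp_flip_eq, hval]
    have h1 : (fun i' => g fun j' => x (finProdFinEquiv (i', j'))) = z := by
      funext i'; rw [hblk i', hu]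
    rw [h1, hblk i]
    have hgne := hjS.2
    have hgval : g (flipBit (u (z i)) j) = ! z i := by
      have huz := hu (z i)
      rcases Bool.eq_false_or_eq_true (g (flipBit (u (z i)) j)) with h | h <;>
      rcases Bool.eq_false_or_eq_true (z i) with h2 | h2 <;> simp_all
    rw [hgval]
    exact hiSf.2
  have hdisj : ∀ i1 ∈ Sf, ∀ i2 ∈ Sf, i1 ≠ i2 → Disjoint (t i1) (t i2) := by
    intro i1 _ i2 _ hne12
    rw [Finset.disjoint_left]
    intro K h1 h2
    rw [ht, Finset.mem_image] at h1 h2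
    obtain ⟨j1, -, rfl⟩ := h1
    obtain ⟨j2, -, hK⟩ := h2
    exact hne12 (congrArg Prod.fst (finProdFinEquiv.injective hK.symm))
  have hcard := Finset.card_le_card hsub
  rw [Finset.card_biUnion hdisj] at hcard
  refine le_trans ?_ hcard
  have hstep : ∀ i ∈ Sf, s ≤ (t i).card := by
    intro i _
    rw [ht, Finset.card_image_of_injective _ (fun j1 j2 h => by
      exact congrArg Prod.snd (finProdFinEquiv.injective h))]
    exact hs (z i)
  calc sensAt f z * s = ∑ _i ∈ Sf, s := by
        rw [Finset.sum_const, smul_eq_mul]; rfl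
    _ ≤ ∑ i ∈ Sf, (t i).card := Finset.sum_le_sum hstep

lemma myInv_comp {k l : ℕ} (hf : MyInv f k) (hg : MyInv g l) : MyInv (comp f g) (k + l) := by
  obtain ⟨haltf, hsensf, hptf, ⟨tf, htf, hdf⟩, hf0, hf1⟩ := hf
  obtain ⟨haltg, hsensg, hptg, ⟨tg, htg, hdg⟩, hg0, hg1⟩ := hg
  have hend0 : comp f g (fun _ => false) = false := by
    have h : comp f g (fun _ => false) = f (fun _ => false) := by
      show f _ = f _
      refine congrArg f (funext fun i => ?_)
      exact hg0
    rw [h, hf0]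
  have hend1 : comp f g (fun _ => true) = true := by
    have h : comp f g (fun _ => true) = f (fun _ => true) := by
      show f _ = f _
      refine congrArg f (funext fun i => ?_)
      exact hg1
    rw [h, hf1]
  refine ⟨?_, ?_, ?_, ?_, hend0, hend1⟩
  · obtain ⟨σf, -, hσf⟩ := Finset.exists_mem_eq_sup (Finset.univ : Finset (Equiv.Perm (Fin m)))
      ⟨1, Finset.mem_univ 1⟩ (altOn f)
    obtain ⟨σg, -, hσg⟩ := Finset.exists_mem_eq_sup (Finset.univ : Finset (Equiv.Perm (Fin n)))
      ⟨1, Finset.mem_univ 1⟩ (altOn g)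
    calc 5 ^ (k + l) = 5 ^ k * 5 ^ l := pow_add 5 k l
      _ ≤ alt f * alt g := Nat.mul_le_mul haltf haltg
      _ = altOn f σf * altOn g σg := by
          rw [show alt f = altOn f σf from hσf, show alt g = altOn g σg from hσg]
      _ ≤ altOn (comp f g) (bigPerm σf σg) := altOn_comp hg0 hg1 σf σg
      _ ≤ alt (comp f g) := Finset.le_sup (Finset.mem_univ _)
  · exact le_trans sens_comp
      (le_trans (Nat.mul_le_mul hsensf hsensg) (le_of_eq (pow_add 3 k l).symm))
  · intro b
    obtain ⟨z, hzb, hzs⟩ := hptf b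
    obtain ⟨u0, hu0, hs0⟩ := hptg false
    obtain ⟨u1, hu1, hs1⟩ := hptg true
    have hu : ∀ c, g ((fun c => cond c u1 u0) c) = c := by intro c; cases c <;> simpa
    have hs : ∀ c, 3 ^ l ≤ sensAt g ((fun c => cond c u1 u0) c) := by
      intro c; cases c <;> simpa
    obtain ⟨hvx, hsx⟩ := sensAt_comp_point (f := f) z (fun c => cond c u1 u0) hu (3 ^ l) hs
    refine ⟨_, by rw [hvx, hzb], ?_⟩
    refine le_trans ?_ hsx
    rw [pow_add]
    exact Nat.mul_le_mul hzs (le_refl _)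
  · refine ⟨DTree.compT tg tf, fun x => ?_, ?_⟩
    · rw [DTree.eval_compT, htf]
      show f _ = f _
      refine congrArg f (funext fun i => ?_)
      exact htg _
    · exact le_trans (DTree.depth_compT tg tf)
        (le_trans (Nat.mul_le_mul hdf hdg) (le_of_eq (pow_add 3 k l).symm))

end CompLemmas

def sigma0 : Equiv.Perm (Fin 6) where
  toFun := ![3, 1, 0, 2, 5, 4]
  invFun := ![2, 1, 3, 0, 5, 4]
  left_inv := by intro i; fin_cases i <;> rfl
  right_inv := by intro i; fin_cases i <;> rfl

lemma myInv_ADDR2 : MyInv ADDR2 1 := by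
  refine ⟨?_, ?_, ?_, ?_, rfl, rfl⟩
  · have h : altOn ADDR2 sigma0 = 5 := by decide
    calc 5 ^ 1 = 5 := pow_one 5
      _ = altOn ADDR2 sigma0 := h.symm
      _ ≤ alt ADDR2 := Finset.le_sup (Finset.mem_univ _)
  · apply Finset.sup_le
    intro x _
    have h : ∀ y : Fin 6 → Bool, sensAt ADDR2 y ≤ 3 := by decide
    simpa using h x
  · intro b
    cases b
    · exact ⟨![false, false, false, true, true, true], by decide, by decide⟩
    · exact ⟨![false, false, true, false, false, false], by decide, by decide⟩
  · refine ⟨DTree.node 0 (DTree.node 1 (DTree.node 2 (DTree.leaf false) (DTree.leaf true))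
      (DTree.node 3 (DTree.leaf false) (DTree.leaf true)))
      (DTree.node 1 (DTree.node 4 (DTree.leaf false) (DTree.leaf true))
      (DTree.node 5 (DTree.leaf false) (DTree.leaf true))), by decide, by decide⟩

lemma myInv_iter : ∀ j : ℕ, MyInv (iterComp ADDR2 j) (j + 1) := by
  intro j
  induction j with
  | zero =>
    have h := measure_reindex (fun n F => MyInv F 1) (pow_one 6).symm ADDR2
    exact cast h.symm myInv_ADDR2
  | succ j ih =>
    have h := measure_reindex (fun n F => MyInv F (j + 2)) (pow_succ 6 (j + 1)).symm
      (comp (iterComp ADDR2 j) ADDR2)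
    exact cast h.symm (myInv_comp (k := j + 1) (l := 1) ih myInv_ADDR2)

end AuxAddr2

/-- For every `k ≥ 1`, the function `g_k = ADDR₂^{∘k}` (the `k`-fold
composition of the address function, on `n_k = 6^k` variables; recall
`iterComp ADDR2 (k - 1)` is the `k`-fold composition) satisfies `alt (g_k) ≥ 5 ^ k`
and `s (g_k) ≤ 3 ^ k`, hence `alt (g_k) ≥ s (g_k) ^ (log_3 5)`; moreover
`DT (g_k) = 3 ^ k = n_k ^ (log_6 3)`. -/
theorem addr2_iter_props (k : ℕ) (hk : 1 ≤ k) :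
    5 ^ k ≤ alt (iterComp ADDR2 (k - 1)) ∧
    sens (iterComp ADDR2 (k - 1)) ≤ 3 ^ k ∧
    ((sens (iterComp ADDR2 (k - 1)) : ℝ)) ^ (Real.logb 3 5) ≤
      (alt (iterComp ADDR2 (k - 1)) : ℝ) ∧
    DT (iterComp ADDR2 (k - 1)) = 3 ^ k ∧
    ((3 : ℝ) ^ k = ((6 : ℝ) ^ k) ^ (Real.logb 6 3)) := by
  obtain ⟨j, rfl⟩ : ∃ j, k = j + 1 := ⟨k - 1, (Nat.succ_pred_eq_of_pos hk).symm⟩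
  rw [Nat.add_sub_cancel]
  obtain ⟨halt, hsens, hpt, ⟨t, htc, htd⟩, -, -⟩ := myInv_iter j
  refine ⟨halt, hsens, ?_, ?_, ?_⟩
  · have hc : (0 : ℝ) ≤ Real.logb 3 5 := Real.logb_nonneg (by norm_num) (by norm_num)
    have h1 : ((sens (iterComp ADDR2 j) : ℝ)) ^ (Real.logb 3 5)
        ≤ ((3 : ℝ) ^ (j + 1)) ^ (Real.logb 3 5) := by
      apply Real.rpow_le_rpow (by positivity) ?_ hc
      exact_mod_cast hsens
    have h2 : ((3 : ℝ) ^ (j + 1)) ^ (Real.logb 3 5) = (5 : ℝ) ^ (j + 1) := by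
      rw [← Real.rpow_natCast (3 : ℝ) (j + 1), ← Real.rpow_mul (by norm_num), mul_comm,
        Real.rpow_mul (by norm_num), Real.rpow_logb (by norm_num) (by norm_num) (by norm_num),
        Real.rpow_natCast]
    refine le_trans (h1.trans (le_of_eq h2)) ?_
    exact_mod_cast halt
  · have hub : DT (iterComp ADDR2 j) ≤ 3 ^ (j + 1) :=
      le_trans (Nat.sInf_le ⟨t, htc, rfl⟩) htd
    have hne : {d | ∃ t' : DTree (6 ^ (j + 1)),
        (∀ x, t'.eval x = iterComp ADDR2 j x) ∧ t'.depth = d}.Nonempty := ⟨t.depth, t, htc, rfl⟩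
    obtain ⟨t', ht'c, ht'd⟩ := Nat.sInf_mem hne
    obtain ⟨x0, -, hx0⟩ := hpt true
    have hDT : DT (iterComp ADDR2 j) = t'.depth := ht'd.symm
    have hlb : 3 ^ (j + 1) ≤ DT (iterComp ADDR2 j) := by
      rw [hDT]
      exact le_trans hx0 (DTree.sensAt_le_depth t' _ ht'c x0)
    exact le_antisymm hub hlb
  · rw [← Real.rpow_natCast (6 : ℝ) (j + 1), ← Real.rpow_mul (by norm_num), mul_comm,
      Real.rpow_mul (by norm_num), Real.rpow_logb (by norm_num) (by norm_num) (by norm_num),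
      Real.rpow_natCast]
end
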